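/- For every v > 0 and θ ∈ ℝ, set σ_b² = (n/σ² + 1/v − 1/(v²A(v)))⁻¹ and μ_b = σ_b² · (nȳ/σ² + (Σₖ Nₖ(v)Yₖ)/(v²A(v))), and R(v) = v^{−(K+1)/2} Πₖ Nₖ(v)^{1/2} A(v)^{−1/2} exp{(Σₖ YₖNₖ(v))²/(2v²A(v))} exp{(1/2)Σₖ Yₖ²Nₖ(v)}. Then n/σ² + 1/v − 1/(v²A(v)) > 0 and the following exact identity holds: v^{−(K+1)/2} ∫_ℝ ∫_{ℝᴷ} exp{−(n/(2σ²))(ȳ − θ)² − (1/2)Σₖ (n₀ₖ/σ₀ₖ²)(ȳ₀ₖ − θ₀ₖ)² − (θ − μ)²/(2v) − (1/(2v))Σₖ(θ₀ₖ − μ)²} dθ₀ dμ = (2π)^{(K+1)/2} · exp{−(1/2)Σₖ n₀ₖȳ₀ₖ²/σ₀ₖ² − nȳ²/(2σ²)} · R(v) · exp{−(θ − μ_b)²/(2σ_b²)} · exp{μ_b²/(2σ_b²)}. -/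

import Mathlib

open MeasureTheory Real

lemma gauss_integral (b c d : ℝ) (hb : 0 < b) :
    ∫ x : ℝ, Real.exp (-b * x ^ 2 + c * x + d)
      = Real.sqrt (π / b) * Real.exp (c ^ 2 / (4 * b) + d) := by
  have h : ∀ x : ℝ, -b * x ^ 2 + c * x + d
      = -b * (x - c / (2 * b)) ^ 2 + (c ^ 2 / (4 * b) + d) := by
    intro x; field_simp; ring
  simp_rw [h, Real.exp_add]
  rw [MeasureTheory.integral_mul_const _ _,
    integral_sub_right_eq_self (fun x => Real.exp (-b * x ^ 2)) (c / (2 * b)),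
    integral_gaussian]

lemma aux_double (K : ℕ) (v : ℝ) (hv : 0 < v) (a yb : Fin K → ℝ) (ha : ∀ k, 0 < a k)
    (c θ Av : ℝ) (hAv : Av = (1 + K) / v - (∑ k, (a k + 1 / v)⁻¹) / v ^ 2)
    (hApos : 0 < Av) :
    (∫ μ : ℝ, ∫ θ0 : Fin K → ℝ,
        Real.exp (c - (1 / 2) * ∑ k, a k * (yb k - θ0 k) ^ 2 -
          (θ - μ) ^ 2 / (2 * v) - (1 / (2 * v)) * ∑ k, (θ0 k - μ) ^ 2))
      = (∏ k, Real.sqrt (π / ((a k + 1 / v) / 2))) * Real.sqrt (π / (Av / 2)) *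
        Real.exp (((θ + ∑ k, (a k + 1 / v)⁻¹ * (a k * yb k)) / v) ^ 2 / (4 * (Av / 2)) +
          (c + (-θ ^ 2 / (2 * v) - (∑ k, a k * yb k ^ 2) / 2 +
            (∑ k, (a k + 1 / v)⁻¹ * (a k * yb k) ^ 2) / 2))) := by
  have hv' : v ≠ 0 := ne_of_gt hv
  have hav : ∀ k, (0:ℝ) < a k + 1 / v := fun k => by
    have := ha k; positivity
  have step1 : ∀ μ : ℝ,
      (∫ θ0 : Fin K → ℝ,
        Real.exp (c - (1 / 2) * ∑ k, a k * (yb k - θ0 k) ^ 2 -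
          (θ - μ) ^ 2 / (2 * v) - (1 / (2 * v)) * ∑ k, (θ0 k - μ) ^ 2))
      = Real.exp (c - (θ - μ) ^ 2 / (2 * v)) *
          ∏ k, (Real.sqrt (π / ((a k + 1 / v) / 2)) *
            Real.exp ((a k * yb k + μ / v) ^ 2 / (4 * ((a k + 1 / v) / 2)) +
              (-(a k * yb k ^ 2) / 2 - μ ^ 2 / (2 * v)))) := by
    intro μ
    have e1 : ∀ θ0 : Fin K → ℝ,
        c - (1 / 2) * ∑ k, a k * (yb k - θ0 k) ^ 2 -
          (θ - μ) ^ 2 / (2 * v) - (1 / (2 * v)) * ∑ k, (θ0 k - μ) ^ 2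
        = (c - (θ - μ) ^ 2 / (2 * v)) +
            ∑ k, (-((a k + 1 / v) / 2) * θ0 k ^ 2 + (a k * yb k + μ / v) * θ0 k +
              (-(a k * yb k ^ 2) / 2 - μ ^ 2 / (2 * v))) := by
      intro θ0
      have e2 : ∀ k : Fin K,
          -((a k + 1 / v) / 2) * θ0 k ^ 2 + (a k * yb k + μ / v) * θ0 k +
              (-(a k * yb k ^ 2) / 2 - μ ^ 2 / (2 * v))
          = (-(1 / 2)) * (a k * (yb k - θ0 k) ^ 2) + (-(1 / (2 * v))) * ((θ0 k - μ) ^ 2) := by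
        intro k; field_simp; ring
      rw [Finset.sum_congr rfl fun k _ => e2 k, Finset.sum_add_distrib,
        ← Finset.mul_sum, ← Finset.mul_sum]
      ring
    simp_rw [e1, Real.exp_add (c - (θ - μ) ^ 2 / (2 * v)), Real.exp_sum]
    rw [MeasureTheory.integral_const_mul]
    rw [MeasureTheory.integral_fintype_prod_volume_eq_prod (ι := Fin K)
      (f := fun k x => Real.exp (-((a k + 1 / v) / 2) * x ^ 2 + (a k * yb k + μ / v) * x +
        (-(a k * yb k ^ 2) / 2 - μ ^ 2 / (2 * v))))]
    congr 1
    exact Finset.prod_congr rfl fun k _ => gauss_integral _ _ _ (half_pos (hav k))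
  have step2 : ∀ μ : ℝ,
      Real.exp (c - (θ - μ) ^ 2 / (2 * v)) *
          ∏ k, (Real.sqrt (π / ((a k + 1 / v) / 2)) *
            Real.exp ((a k * yb k + μ / v) ^ 2 / (4 * ((a k + 1 / v) / 2)) +
              (-(a k * yb k ^ 2) / 2 - μ ^ 2 / (2 * v))))
      = (∏ k, Real.sqrt (π / ((a k + 1 / v) / 2))) *
          Real.exp (-(Av / 2) * μ ^ 2 + ((θ + ∑ k, (a k + 1 / v)⁻¹ * (a k * yb k)) / v) * μ +
            (c + (-θ ^ 2 / (2 * v) - (∑ k, a k * yb k ^ 2) / 2 +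
              (∑ k, (a k + 1 / v)⁻¹ * (a k * yb k) ^ 2) / 2))) := by
    intro μ
    rw [Finset.prod_mul_distrib, ← Real.exp_sum]
    have hsum : ∑ k, ((a k * yb k + μ / v) ^ 2 / (4 * ((a k + 1 / v) / 2)) +
          (-(a k * yb k ^ 2) / 2 - μ ^ 2 / (2 * v)))
        = ((∑ k, (a k + 1 / v)⁻¹ * (a k * yb k) ^ 2) / 2 - (∑ k, a k * yb k ^ 2) / 2)
          + ((∑ k, (a k + 1 / v)⁻¹ * (a k * yb k)) / v) * μ
          + ((∑ k, (a k + 1 / v)⁻¹) / (2 * v ^ 2) - (K : ℝ) * (1 / (2 * v))) * μ ^ 2 := by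
      have e : ∀ k : Fin K, (a k * yb k + μ / v) ^ 2 / (4 * ((a k + 1 / v) / 2)) +
            (-(a k * yb k ^ 2) / 2 - μ ^ 2 / (2 * v))
          = ((a k + 1 / v)⁻¹ * (a k * yb k) ^ 2 / 2 - a k * yb k ^ 2 / 2)
            + ((a k + 1 / v)⁻¹ * (a k * yb k) / v) * μ
            + ((a k + 1 / v)⁻¹ / (2 * v ^ 2) - 1 / (2 * v)) * μ ^ 2 := by
        intro k
        have h1 : a k + 1 / v ≠ 0 := (hav k).ne'
        generalize hgen : a k + 1 / v = t
        have ht : t ≠ 0 := hgen ▸ h1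
        field_simp
        ring
      rw [Finset.sum_congr rfl fun k _ => e k]
      rw [Finset.sum_add_distrib, Finset.sum_add_distrib, ← Finset.sum_mul, ← Finset.sum_mul,
        Finset.sum_sub_distrib, Finset.sum_sub_distrib, ← Finset.sum_div, ← Finset.sum_div,
        ← Finset.sum_div, ← Finset.sum_div, Finset.sum_const, Finset.card_univ,
        Fintype.card_fin, nsmul_eq_mul]
    rw [hsum, mul_left_comm, ← Real.exp_add]
    congr 2
    rw [hAv]
    field_simp
    ring
  simp_rw [step1, step2]
  rw [MeasureTheory.integral_const_mul,
    gauss_integral (Av / 2) ((θ + ∑ k, (a k + 1 / v)⁻¹ * (a k * yb k)) / v)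
      (c + (-θ ^ 2 / (2 * v) - (∑ k, a k * yb k ^ 2) / 2 +
        (∑ k, (a k + 1 / v)⁻¹ * (a k * yb k) ^ 2) / 2)) (half_pos hApos), mul_assoc]

lemma final_alg (v A2 σ2 n ybar θ S U W : ℝ) (hv : v ≠ 0) (hσ2 : σ2 ≠ 0) (hA : A2 ≠ 0)
    (hP : n / σ2 + 1 / v - 1 / (v ^ 2 * A2) ≠ 0) :
    ((θ + S) / v) ^ 2 / (4 * (A2 / 2)) +
        (-(n / (2 * σ2)) * (ybar - θ) ^ 2 + (-θ ^ 2 / (2 * v) - U / 2 + W / 2))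
      = (-(1 / 2) * U - n * ybar ^ 2 / (2 * σ2))
        + (S ^ 2 / (2 * v ^ 2 * A2)
        + ((1 / 2) * W
        + (-(θ - (n / σ2 + 1 / v - 1 / (v ^ 2 * A2))⁻¹ * (n * ybar / σ2 + S / (v ^ 2 * A2))) ^ 2 /
            (2 * (n / σ2 + 1 / v - 1 / (v ^ 2 * A2))⁻¹)
          + ((n / σ2 + 1 / v - 1 / (v ^ 2 * A2))⁻¹ * (n * ybar / σ2 + S / (v ^ 2 * A2))) ^ 2 /
            (2 * (n / σ2 + 1 / v - 1 / (v ^ 2 * A2))⁻¹)))) := by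
  have key : ∀ P M : ℝ, P ≠ 0 →
      -(θ - P⁻¹ * M) ^ 2 / (2 * P⁻¹) + (P⁻¹ * M) ^ 2 / (2 * P⁻¹)
        = -(θ ^ 2 * P) / 2 + θ * M := by
    intro P M hP0
    field_simp
    ring
  rw [key _ _ hP]
  have hvA : v ^ 2 * A2 ≠ 0 := by simp [hv, hA]
  field_simp
  ring

/-- the joint unnormalized posterior density of `(θ, v)` in the `K`-dataset
Bayesian hierarchical model with improper uniform prior on the hypermean, written as a
Gaussian in `θ` with precision `1/σ_b²`, mean `μ_b`, and `v`-dependent factor `R(v)`. -/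
theorem stmt_14 (K : ℕ) (hK : 1 ≤ K)
    (σ2 n : ℝ) (hσ2 : 0 < σ2) (hn : 0 < n) (ybar : ℝ)
    (σ02 n0 ybar0 : Fin K → ℝ)
    (hσ02 : ∀ k, 0 < σ02 k) (hn0 : ∀ k, 0 < n0 k)
    (N : ℝ → Fin K → ℝ)
    (hN : ∀ v > (0 : ℝ), ∀ k, N v k = (n0 k / σ02 k + 1 / v)⁻¹)
    (Y : Fin K → ℝ) (hY : ∀ k, Y k = n0 k * ybar0 k / σ02 k)
    (A : ℝ → ℝ)
    (hA : ∀ v > (0 : ℝ), A v = (1 + K) / v - (∑ k, N v k) / v ^ 2)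
    (σb2 μb R : ℝ → ℝ)
    (hσb2 : ∀ v > (0 : ℝ), σb2 v = (n / σ2 + 1 / v - 1 / (v ^ 2 * A v))⁻¹)
    (hμb : ∀ v > (0 : ℝ), μb v =
      σb2 v * (n * ybar / σ2 + (∑ k, N v k * Y k) / (v ^ 2 * A v)))
    (hR : ∀ v > (0 : ℝ), R v =
      v ^ (-(((K : ℝ) + 1) / 2)) * (∏ k, Real.sqrt (N v k)) * (Real.sqrt (A v))⁻¹ *
        Real.exp ((∑ k, Y k * N v k) ^ 2 / (2 * v ^ 2 * A v)) *
        Real.exp ((1 / 2) * ∑ k, Y k ^ 2 * N v k)) :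
    ∀ v > (0 : ℝ),
      0 < n / σ2 + 1 / v - 1 / (v ^ 2 * A v) ∧
      ∀ θ : ℝ,
        v ^ (-(((K : ℝ) + 1) / 2)) *
          (∫ μ : ℝ, ∫ θ0 : Fin K → ℝ,
            Real.exp (-(n / (2 * σ2)) * (ybar - θ) ^ 2 -
              (1 / 2) * ∑ k, (n0 k / σ02 k) * (ybar0 k - θ0 k) ^ 2 -
              (θ - μ) ^ 2 / (2 * v) - (1 / (2 * v)) * ∑ k, (θ0 k - μ) ^ 2)) =
        (2 * π) ^ (((K : ℝ) + 1) / 2) *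
          Real.exp (-(1 / 2) * (∑ k, n0 k * ybar0 k ^ 2 / σ02 k) -
            n * ybar ^ 2 / (2 * σ2)) *
          R v * Real.exp (-(θ - μb v) ^ 2 / (2 * σb2 v)) *
          Real.exp (μb v ^ 2 / (2 * σb2 v)) := by
  intro v hv
  have hv' : v ≠ 0 := ne_of_gt hv
  have ha : ∀ k, 0 < n0 k / σ02 k := fun k => div_pos (hn0 k) (hσ02 k)
  have hav : ∀ k, (0:ℝ) < n0 k / σ02 k + 1 / v := fun k => by
    have := ha k; positivity
  have hNpos : ∀ k, 0 < N v k := fun k => by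
    rw [hN v hv k]; exact inv_pos.mpr (hav k)
  have hNle : ∀ k, N v k ≤ v := fun k => by
    rw [hN v hv k]
    calc (n0 k / σ02 k + 1 / v)⁻¹ ≤ (1 / v)⁻¹ := by
          apply inv_anti₀ (by positivity)
          exact le_add_of_nonneg_left (ha k).le
      _ = v := by rw [one_div, inv_inv]
  have hTle : ∑ k, N v k ≤ (K : ℝ) * v := by
    calc ∑ k, N v k ≤ ∑ _k : Fin K, v := Finset.sum_le_sum fun k _ => hNle k
      _ = (K : ℝ) * v := by
          rw [Finset.sum_const, Finset.card_univ, Fintype.card_fin, nsmul_eq_mul]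
  have hApos : 0 < A v := by
    rw [hA v hv]
    have h1 : (∑ k, N v k) / v ^ 2 ≤ ((K : ℝ) * v) / v ^ 2 := by gcongr
    have h2 : ((K : ℝ) * v) / v ^ 2 = (K : ℝ) / v := by
      field_simp
    have h3 : (1 + (K : ℝ)) / v - (K : ℝ) / v = 1 / v := by ring
    have h4 : 0 < 1 / v := by positivity
    linarith
  have hv2A : v ≤ v ^ 2 * A v := by
    have h5 : v ^ 2 * A v = (1 + (K : ℝ)) * v - ∑ k, N v k := by
      rw [hA v hv]; field_simp
    rw [h5]; linarith
  have hvApos : 0 < v ^ 2 * A v := lt_of_lt_of_le hv hv2A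
  have hP : 0 < n / σ2 + 1 / v - 1 / (v ^ 2 * A v) := by
    have h6 : 1 / (v ^ 2 * A v) ≤ 1 / v := one_div_le_one_div_of_le hv hv2A
    have h7 : 0 < n / σ2 := div_pos hn hσ2
    linarith
  refine ⟨hP, fun θ => ?_⟩
  have hAv' : A v = (1 + K) / v - (∑ k, (n0 k / σ02 k + 1 / v)⁻¹) / v ^ 2 := by
    have : ∑ k, N v k = ∑ k, (n0 k / σ02 k + 1 / v)⁻¹ :=
      Finset.sum_congr rfl fun k _ => hN v hv k
    rw [hA v hv, this]
  have H : (∫ μ : ℝ, ∫ θ0 : Fin K → ℝ,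
        Real.exp (-(n / (2 * σ2)) * (ybar - θ) ^ 2 -
          (1 / 2) * ∑ k, (n0 k / σ02 k) * (ybar0 k - θ0 k) ^ 2 -
          (θ - μ) ^ 2 / (2 * v) - (1 / (2 * v)) * ∑ k, (θ0 k - μ) ^ 2))
      = (∏ k, Real.sqrt (π / ((n0 k / σ02 k + 1 / v) / 2))) * Real.sqrt (π / (A v / 2)) *
        Real.exp (((θ + ∑ k, (n0 k / σ02 k + 1 / v)⁻¹ * (n0 k / σ02 k * ybar0 k)) / v) ^ 2 /
            (4 * (A v / 2)) +
          (-(n / (2 * σ2)) * (ybar - θ) ^ 2 +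
            (-θ ^ 2 / (2 * v) - (∑ k, n0 k / σ02 k * ybar0 k ^ 2) / 2 +
              (∑ k, (n0 k / σ02 k + 1 / v)⁻¹ * (n0 k / σ02 k * ybar0 k) ^ 2) / 2))) :=
    aux_double K v hv (fun k => n0 k / σ02 k) ybar0 ha
      (-(n / (2 * σ2)) * (ybar - θ) ^ 2) θ (A v) hAv' hApos
  rw [H]
  have hprod : (∏ k, Real.sqrt (π / ((n0 k / σ02 k + 1 / v) / 2)))
      = Real.sqrt (2 * π) ^ K * ∏ k, Real.sqrt (N v k) := by
    calc (∏ k, Real.sqrt (π / ((n0 k / σ02 k + 1 / v) / 2)))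
        = ∏ k, (Real.sqrt (2 * π) * Real.sqrt (N v k)) := by
          refine Finset.prod_congr rfl fun k _ => ?_
          rw [hN v hv k, show π / ((n0 k / σ02 k + 1 / v) / 2)
              = (2 * π) * (n0 k / σ02 k + 1 / v)⁻¹ from by
            rw [div_div_eq_mul_div, div_eq_mul_inv]; ring,
            Real.sqrt_mul (by positivity)]
      _ = Real.sqrt (2 * π) ^ K * ∏ k, Real.sqrt (N v k) := by
          rw [Finset.prod_mul_distrib, Finset.prod_const, Finset.card_univ, Fintype.card_fin]
  have hsqA : Real.sqrt (π / (A v / 2)) = Real.sqrt (2 * π) * (Real.sqrt (A v))⁻¹ := by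
    rw [show π / (A v / 2) = (2 * π) * (A v)⁻¹ from by
      rw [div_div_eq_mul_div, div_eq_mul_inv]; ring,
      Real.sqrt_mul (by positivity), Real.sqrt_inv]
  have h2pi : (2 * π) ^ (((K : ℝ) + 1) / 2) = Real.sqrt (2 * π) ^ K * Real.sqrt (2 * π) := by
    rw [show (((K : ℝ) + 1) / 2) = (1 / 2) * ((K : ℝ) + 1) by ring,
      Real.rpow_mul (by positivity : (0:ℝ) ≤ 2 * π), ← Real.sqrt_eq_rpow,
      show ((K : ℝ) + 1) = ((K + 1 : ℕ) : ℝ) by push_cast; ring,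
      Real.rpow_natCast, pow_succ]
  have hS2 : ∑ k, N v k * Y k
      = ∑ k, (n0 k / σ02 k + 1 / v)⁻¹ * (n0 k / σ02 k * ybar0 k) :=
    Finset.sum_congr rfl fun k _ => by rw [hY k, hN v hv k]; ring
  have hS : ∑ k, Y k * N v k
      = ∑ k, (n0 k / σ02 k + 1 / v)⁻¹ * (n0 k / σ02 k * ybar0 k) :=
    Finset.sum_congr rfl fun k _ => by rw [hY k, hN v hv k]; ring
  have hW : ∑ k, Y k ^ 2 * N v k
      = ∑ k, (n0 k / σ02 k + 1 / v)⁻¹ * (n0 k / σ02 k * ybar0 k) ^ 2 :=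
    Finset.sum_congr rfl fun k _ => by rw [hY k, hN v hv k]; ring
  have hU : ∑ k, n0 k * ybar0 k ^ 2 / σ02 k = ∑ k, n0 k / σ02 k * ybar0 k ^ 2 :=
    Finset.sum_congr rfl fun k _ => by ring
  have hX : ((θ + ∑ k, (n0 k / σ02 k + 1 / v)⁻¹ * (n0 k / σ02 k * ybar0 k)) / v) ^ 2 /
            (4 * (A v / 2)) +
          (-(n / (2 * σ2)) * (ybar - θ) ^ 2 +
            (-θ ^ 2 / (2 * v) - (∑ k, n0 k / σ02 k * ybar0 k ^ 2) / 2 +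
              (∑ k, (n0 k / σ02 k + 1 / v)⁻¹ * (n0 k / σ02 k * ybar0 k) ^ 2) / 2))
      = (-(1 / 2) * (∑ k, n0 k * ybar0 k ^ 2 / σ02 k) - n * ybar ^ 2 / (2 * σ2))
        + ((∑ k, Y k * N v k) ^ 2 / (2 * v ^ 2 * A v)
        + ((1 / 2) * ∑ k, Y k ^ 2 * N v k
        + (-(θ - μb v) ^ 2 / (2 * σb2 v) + μb v ^ 2 / (2 * σb2 v)))) := by
    rw [hU, hS, hW, hμb v hv, hσb2 v hv, hS2]
    exact final_alg v (A v) σ2 n ybar θ _ _ _ hv' hσ2.ne' hApos.ne' hP.ne'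
  rw [hR v hv, hprod, hsqA, h2pi, hX]
  simp only [Real.exp_add]
  ring
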